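/- Let (m_k) be a strictly increasing sequence of positive integers with m_{k+1} − m_k → ∞, and fix β ∈ ℝ/ℤ. Then for every irrational α ∈ ℝ/ℤ there exists a sequence (n_k) of positive integers with m_k ≤ n_k < m_{k+1} for all k and ‖n_k α − β‖ → 0, where ‖·‖ denotes distance to 0 in ℝ/ℤ. -/

import Mathlib

private lemma coe_int_zero' (z : ℤ) : ((z : ℝ) : AddCircle (1 : ℝ)) = 0 :=
  (AddCircle.coe_eq_zero_iff (1:ℝ)).2 ⟨z, by simp⟩

private lemma dist_coe_le' (u v : ℝ) :
    dist ((u : ℝ) : AddCircle (1 : ℝ)) ((v : ℝ) : AddCircle (1 : ℝ)) ≤ |u - v| := by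
  rw [dist_eq_norm, ← AddCircle.coe_sub]
  simpa using QuotientAddGroup.norm_mk_le_norm (S := AddSubgroup.zmultiples (1 : ℝ)) (m := u - v)

private lemma norm_coe_le' (u : ℝ) : ‖((u : ℝ) : AddCircle (1 : ℝ))‖ ≤ |u| := by
  simpa using QuotientAddGroup.norm_mk_le_norm (S := AddSubgroup.zmultiples (1 : ℝ)) (m := u)

/-- For irrational `α`, there are positive integers `q` with `‖qα‖` arbitrarily small
(and positive). -/
private lemma exists_good_q (α : ℝ) (hα : Irrational α) {ε : ℝ} (hε : 0 < ε) :
    ∃ q : ℕ, 0 < q ∧ 0 < ‖(((q : ℝ) * α : ℝ) : AddCircle (1 : ℝ))‖ ∧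
      ‖(((q : ℝ) * α : ℝ) : AddCircle (1 : ℝ))‖ < ε := by
  have hpos : ∀ q : ℕ, 0 < q → 0 < ‖(((q : ℝ) * α : ℝ) : AddCircle (1 : ℝ))‖ := by
    intro q hq
    rcases eq_or_lt_of_le (norm_nonneg (((q : ℝ) * α : ℝ) : AddCircle (1 : ℝ))) with h | h
    · exfalso
      have h0 : (((q : ℝ) * α : ℝ) : AddCircle (1 : ℝ)) = 0 := by
        rwa [eq_comm, norm_eq_zero] at h
      obtain ⟨z, hz⟩ := (AddCircle.coe_eq_zero_iff (1:ℝ)).1 h0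
      have : α = (z : ℝ) / (q : ℝ) := by
        have hq' : (q : ℝ) ≠ 0 := Nat.cast_ne_zero.2 hq.ne'
        field_simp
        simpa [mul_comm] using hz.symm
      exact hα ⟨(z : ℚ) / (q : ℚ), by push_cast; rw [this]⟩
    · exact h
  -- density of ℤ + ℤα
  have hSdense : Dense ((AddSubgroup.closure ({1, α} : Set ℝ) : AddSubgroup ℝ) : Set ℝ) := by
    rcases AddSubgroup.dense_or_cyclic (AddSubgroup.closure ({1, α} : Set ℝ)) with h | ⟨a, ha⟩
    · exact h
    · exfalso
      have h1 : (1 : ℝ) ∈ AddSubgroup.closure ({1, α} : Set ℝ) :=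
        AddSubgroup.subset_closure (by simp)
      have h2 : α ∈ AddSubgroup.closure ({1, α} : Set ℝ) :=
        AddSubgroup.subset_closure (by simp)
      rw [ha] at h1 h2
      obtain ⟨n, hn⟩ := AddSubgroup.mem_closure_singleton.1 h1
      obtain ⟨k, hk⟩ := AddSubgroup.mem_closure_singleton.1 h2
      have hn0 : n ≠ 0 := by
        rintro rfl; simp at hn
      have ha' : a = 1 / (n : ℝ) := by
        have hn' : (n : ℝ) ≠ 0 := Int.cast_ne_zero.2 hn0
        field_simp
        simpa [zsmul_eq_mul, mul_comm] using hn
      have : α = (k : ℝ) / (n : ℝ) := by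
        rw [← hk, ha', zsmul_eq_mul]; ring
      exact hα ⟨(k : ℚ) / (n : ℚ), by push_cast; rw [this]⟩
  set ε' := min ε 1 with hε'
  have hε'0 : 0 < ε' := lt_min hε one_pos
  obtain ⟨g, hgS, hg⟩ := hSdense.exists_mem_open isOpen_Ioo
    (Set.nonempty_Ioo.2 hε'0)
  obtain ⟨i, j, hij⟩ := AddSubgroup.mem_closure_pair.1 hgS
  simp only [zsmul_eq_mul, mul_one] at hij
  -- g = i + j * α ∈ (0, ε')
  have hj0 : j ≠ 0 := by
    rintro rfl
    simp only [Int.cast_zero, zero_mul, add_zero] at hij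
    rcases hg with ⟨hg1, hg2⟩
    rw [← hij] at hg1 hg2
    have : (0 : ℤ) < i := by exact_mod_cast hg1
    have : (1 : ℝ) ≤ (i : ℝ) := by exact_mod_cast this
    have := hg2.trans_le (min_le_right ε 1)
    linarith
  refine ⟨j.natAbs, Int.natAbs_pos.2 hj0, hpos _ (Int.natAbs_pos.2 hj0), ?_⟩
  have key : ‖(((j.natAbs : ℝ) * α : ℝ) : AddCircle (1 : ℝ))‖ = ‖((g : ℝ) : AddCircle (1 : ℝ))‖ := by
    have hg0 : ((g : ℝ) : AddCircle (1 : ℝ)) = (((j : ℝ) * α : ℝ) : AddCircle (1 : ℝ)) := by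
      rw [← hij, AddCircle.coe_add, coe_int_zero' i, zero_add]
    have habs : ((j.natAbs : ℕ) : ℝ) = |(j : ℝ)| := by
      rw [Nat.cast_natAbs, Int.cast_abs]
    rcases abs_choice ((j : ℝ)) with h | h
    · rw [hg0, habs, h]
    · rw [hg0, habs, h, neg_mul, AddCircle.coe_neg, norm_neg]
  rw [key]
  calc ‖((g : ℝ) : AddCircle (1 : ℝ))‖ ≤ |g| := norm_coe_le' g
    _ < ε := by rw [abs_of_pos hg.1]; exact hg.2.trans_le (min_le_left ε 1)

/-- Window lemma: for every `ε > 0` there is a window length `L` such that every window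
of `L` consecutive integers contains `n` with `dist (nα) β < ε`. -/
private lemma window_lemma (α : ℝ) (hα : Irrational α) (b : ℝ) {ε : ℝ} (hε : 0 < ε) :
    ∃ L : ℕ, ∀ M : ℕ, ∃ n : ℕ, M ≤ n ∧ n < M + L ∧
      dist ((((n : ℝ) * α : ℝ)) : AddCircle (1 : ℝ)) ((b : ℝ) : AddCircle (1 : ℝ)) < ε := by
  obtain ⟨q, hq0, hδpos, hδε⟩ := exists_good_q α hα hε
  set δ : ℝ := (q : ℝ) * α - round ((q : ℝ) * α) with hδdef
  have hnorm : ‖(((q : ℝ) * α : ℝ) : AddCircle (1 : ℝ))‖ = |δ| := by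
    rw [AddCircle.norm_eq]; simp [hδdef]
  rw [hnorm] at hδpos hδε
  have hδ0 : δ ≠ 0 := abs_pos.1 hδpos
  refine ⟨q * (⌊1 / |δ|⌋₊ + 1) + 1, fun M => ?_⟩
  set s : ℝ := if 0 < δ then Int.fract (b - (M : ℝ) * α) else -Int.fract ((M : ℝ) * α - b)
    with hsdef
  have hs_div_nonneg : 0 ≤ s / δ := by
    rcases lt_or_ge 0 δ with h | h
    · rw [hsdef, if_pos h]; exact div_nonneg (Int.fract_nonneg _) h.le
    · rw [hsdef, if_neg (not_lt.2 h)]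
      rw [← neg_div_neg_eq]
      exact div_nonneg (by simpa using Int.fract_nonneg ((M : ℝ) * α - b)) (by linarith)
  have hs_abs_lt : |s| < 1 := by
    rcases lt_or_ge 0 δ with h | h
    · rw [hsdef, if_pos h, abs_of_nonneg (Int.fract_nonneg _)]; exact Int.fract_lt_one _
    · rw [hsdef, if_neg (not_lt.2 h), abs_neg, abs_of_nonneg (Int.fract_nonneg _)]
      exact Int.fract_lt_one _
  have hs_div_lt : s / δ < 1 / |δ| := by
    have : s / δ = |s| / |δ| := by
      rw [← abs_of_nonneg hs_div_nonneg, abs_div]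
    rw [this]
    gcongr
  have hz : ∃ z : ℤ, ((M : ℝ) * α + s) - b = (z : ℝ) := by
    rcases lt_or_ge 0 δ with h | h
    · refine ⟨-⌊b - (M : ℝ) * α⌋, ?_⟩
      rw [hsdef, if_pos h, Int.fract]
      push_cast; ring
    · refine ⟨⌊(M : ℝ) * α - b⌋, ?_⟩
      rw [hsdef, if_neg (not_lt.2 h), Int.fract]
      push_cast; ring
  obtain ⟨z, hzeq⟩ := hz
  set j : ℕ := ⌊s / δ⌋₊ with hjdef
  have hj_le : (j : ℝ) ≤ s / δ := Nat.floor_le hs_div_nonneg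
  have hj_lt : s / δ < (j : ℝ) + 1 := Nat.lt_floor_add_one _
  have hj_bound : j ≤ ⌊1 / |δ|⌋₊ := Nat.le_floor (hj_le.trans hs_div_lt.le)
  refine ⟨M + j * q, Nat.le_add_right _ _, ?_, ?_⟩
  · have : j * q ≤ ⌊1 / |δ|⌋₊ * q := Nat.mul_le_mul_right _ hj_bound
    calc M + j * q ≤ M + ⌊1 / |δ|⌋₊ * q := by omega
      _ < M + (q * (⌊1 / |δ|⌋₊ + 1) + 1) := by
          have := hq0
          nlinarith [Nat.mul_comm q ⌊1 / |δ|⌋₊]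
  · -- distance bound
    have hcoe1 : ((((M + j * q : ℕ) : ℝ) * α : ℝ) : AddCircle (1 : ℝ))
        = (((M : ℝ) * α + (j : ℝ) * δ : ℝ) : AddCircle (1 : ℝ)) := by
      have : (((M + j * q : ℕ) : ℝ) * α : ℝ)
          = ((M : ℝ) * α + (j : ℝ) * δ) + ((j * round ((q : ℝ) * α) : ℤ) : ℝ) := by
        push_cast [hδdef]; ring
      rw [this, AddCircle.coe_add, coe_int_zero', add_zero]
    have hcoe2 : ((b : ℝ) : AddCircle (1 : ℝ)) = (((M : ℝ) * α + s : ℝ) : AddCircle (1 : ℝ)) := by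
      have : ((M : ℝ) * α + s : ℝ) = b + (z : ℝ) := by linarith [hzeq]
      rw [this, AddCircle.coe_add, coe_int_zero', add_zero]
    rw [hcoe1, hcoe2]
    refine lt_of_le_of_lt (dist_coe_le' _ _) ?_
    calc |((M : ℝ) * α + (j : ℝ) * δ) - ((M : ℝ) * α + s)|
        = |δ| * |(j : ℝ) - s / δ| := by
          rw [← abs_mul]; congr 1; field_simp; ring
      _ < |δ| * 1 := by
          refine mul_lt_mul_of_pos_left ?_ hδpos
          rw [abs_lt]; constructor <;> nlinarith
      _ = |δ| := mul_one _
      _ < ε := hδε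

/-- If `(m_k)` is strictly increasing with `m_{k+1} - m_k → ∞` and `β ∈ ℝ/ℤ`, then for
every irrational `α` there is a sequence `(n_k)` with `m_k ≤ n_k < m_{k+1}` and
`‖n_k α - β‖ → 0`. -/
theorem stmt8 (m : ℕ → ℕ) (hm : StrictMono m) (hm0 : ∀ k, 0 < m k)
    (hgap : Filter.Tendsto (fun k => m (k + 1) - m k) Filter.atTop Filter.atTop)
    (β : AddCircle (1 : ℝ)) (α : ℝ) (hα : Irrational α) :
    ∃ n : ℕ → ℕ, (∀ k, m k ≤ n k ∧ n k < m (k + 1)) ∧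
      Filter.Tendsto (fun k => dist ((((n k : ℝ) * α : ℝ) : AddCircle (1 : ℝ))) β)
        Filter.atTop (nhds 0) := by
  obtain ⟨b, rfl⟩ := QuotientAddGroup.mk_surjective β
  have hne : ∀ k, (Finset.Ico (m k) (m (k + 1))).Nonempty :=
    fun k => Finset.nonempty_Ico.2 (hm (Nat.lt_succ_self k))
  choose n hnmem hnmin using fun k =>
    (Finset.Ico (m k) (m (k + 1))).exists_min_image
      (fun j => dist (((j : ℝ) * α : ℝ) : AddCircle (1 : ℝ)) ((b : ℝ) : AddCircle (1 : ℝ)))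
      (hne k)
  refine ⟨n, fun k => Finset.mem_Ico.1 (hnmem k), ?_⟩
  rw [Metric.tendsto_atTop]
  intro ε hε
  obtain ⟨L, hL⟩ := window_lemma α hα b hε
  have hev : ∀ᶠ k in Filter.atTop, L ≤ m (k + 1) - m k :=
    hgap.eventually_ge_atTop L
  obtain ⟨N, hN⟩ := hev.exists_forall_of_atTop
  refine ⟨N, fun k hk => ?_⟩
  obtain ⟨n', hn'1, hn'2, hn'3⟩ := hL (m k)
  have hwin : m k + L ≤ m (k + 1) := by
    have h1 := hN k hk
    have h2 := (hm (Nat.lt_succ_self k)).le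
    omega
  have hn'mem : n' ∈ Finset.Ico (m k) (m (k + 1)) :=
    Finset.mem_Ico.2 ⟨hn'1, lt_of_lt_of_le hn'2 hwin⟩
  have := hnmin k n' hn'mem
  have hd : dist (((n k : ℝ) * α : ℝ) : AddCircle (1 : ℝ)) ((b : ℝ) : AddCircle (1 : ℝ)) < ε :=
    lt_of_le_of_lt this hn'3
  rw [Real.dist_eq, sub_zero, abs_of_nonneg dist_nonneg]
  exact hd
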